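/- Suppose there exist s₁, s₂ ∈ S and t₁, t₂ ∈ T \ S such that the halfspaces {x : ‖s₁−x‖ ≤ ‖t₁−x‖} and {x : ‖s₂−x‖ ≤ ‖t₂−x‖} coincide. Then V_T(S) equals the intersection of the remaining halfspaces {x : ‖s−x‖ ≤ ‖t−x‖} over pairs (s,t) ∈ S × (T\S) with (s,t) ∉ {(s₁,t₁),(s₂,t₂)}; i.e., these two inequalities are redundant. -/

import Mathlib

open Finset Metric
open scoped Classical

variable {E : Type*} [NormedAddCommGroup E] [InnerProductSpace ℝ E]

private lemma aux_inner (u v : E) (h1 : ‖u - (2:ℝ) • v‖ ≤ ‖u‖) :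
    ‖v‖ ^ 2 ≤ inner ℝ u v := by
  have h2 : ‖u - (2:ℝ) • v‖ ^ 2 ≤ ‖u‖ ^ 2 :=
    pow_le_pow_left₀ (norm_nonneg _) h1 2
  rw [norm_sub_sq_real] at h2
  rw [real_inner_smul_right, norm_smul] at h2
  simp at h2
  nlinarith

/-- If two halfspaces with the same "far" point coincide, the near points coincide. -/
private lemma lemA (a b c : E)
    (h : {x : E | dist x a ≤ dist x c} = {x : E | dist x b ≤ dist x c}) :
    a = b := by
  have key : ∀ p q : E, {x : E | dist x p ≤ dist x c} ⊆ {x : E | dist x q ≤ dist x c} →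
      ‖q - c‖ ^ 2 ≤ inner ℝ (p - c) (q - c) := by
    intro p q hsub
    have hm : (c + (2⁻¹ : ℝ) • (p - c)) ∈ {x : E | dist x p ≤ dist x c} := by
      simp only [Set.mem_setOf_eq, dist_eq_norm]
      have e1 : c + (2⁻¹ : ℝ) • (p - c) - p = -((2⁻¹:ℝ) • (p - c)) := by
        module
      have e2 : c + (2⁻¹ : ℝ) • (p - c) - c = (2⁻¹:ℝ) • (p - c) := by abel
      rw [e1, e2, norm_neg]
    have hq := hsub hm
    simp only [Set.mem_setOf_eq, dist_eq_norm] at hq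
    have e2 : c + (2⁻¹ : ℝ) • (p - c) - c = (2⁻¹:ℝ) • (p - c) := by abel
    have e3 : c + (2⁻¹ : ℝ) • (p - c) - q = (2⁻¹:ℝ) • ((p - c) - (2:ℝ) • (q - c)) := by
      module
    rw [e2, e3, norm_smul, norm_smul] at hq
    have : ‖(p - c) - (2:ℝ) • (q - c)‖ ≤ ‖p - c‖ := by
      simp only [norm_inv, Real.norm_ofNat] at hq ⊢
      nlinarith [norm_nonneg ((p - c) - (2:ℝ) • (q - c))]
    exact aux_inner _ _ this
  have h1 := key a b (h.le)
  have h2 := key b a (h.ge)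
  have hsym : inner ℝ (b - c) (a - c) = (inner ℝ (a - c) (b - c) : ℝ) := real_inner_comm _ _
  have hz : ‖(a - c) - (b - c)‖ ^ 2 ≤ 0 := by
    rw [norm_sub_sq_real]
    nlinarith
  have : (a - c) - (b - c) = 0 := by
    have := norm_nonneg ((a - c) - (b - c))
    have : ‖(a - c) - (b - c)‖ = 0 := by nlinarith
    exact norm_eq_zero.mp this
  have : a - b = 0 := by rw [← this]; abel
  exact sub_eq_zero.mp this

/-- If two halfspaces with the same "near" point coincide, the far points coincide. -/
private lemma lemB (s t₁ t₂ : E) (h1 : t₁ ≠ s) (h2 : t₂ ≠ s)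
    (h : {x : E | dist x s ≤ dist x t₁} = {x : E | dist x s ≤ dist x t₂}) :
    t₁ = t₂ := by
  have hc : ∀ x : E, dist x t₁ < dist x s ↔ dist x t₂ < dist x s := by
    intro x
    rw [← not_le, ← not_le]
    exact not_congr (Set.ext_iff.mp h x)
  have key : ∀ p q : E, p ≠ s → (∀ x : E, dist x p < dist x s → dist x q < dist x s) →
      ∀ x : E, dist x p ≤ dist x s → dist x q ≤ dist x s := by
    intro p q hp hpq x hx
    set u := p - s with hu
    have hun : 0 < ‖u‖ := by
      rw [norm_pos_iff]; exact sub_ne_zero.mpr hp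
    have hstep : ∀ ε : ℝ, 0 < ε → dist (x + ε • u) p < dist (x + ε • u) s := by
      intro ε hε
      rw [dist_eq_norm, dist_eq_norm]
      apply lt_of_pow_lt_pow_left₀ 2 (norm_nonneg _)
      have eA : x + ε • u - p = (x - p) + ε • u := by abel
      have eB : x + ε • u - s = (x - s) + ε • u := by abel
      rw [eA, eB, norm_add_sq_real, norm_add_sq_real]
      rw [real_inner_smul_right, real_inner_smul_right]
      have hin : inner ℝ (x - s) u - inner ℝ (x - p) u = (‖u‖ : ℝ) ^ 2 := by
        rw [← inner_sub_left]
        have : x - s - (x - p) = u := by rw [hu]; abel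
        rw [this, real_inner_self_eq_norm_sq]
      have hxle : ‖x - p‖ ≤ ‖x - s‖ := by
        rw [dist_eq_norm, dist_eq_norm] at hx; exact hx
      nlinarith [mul_pos hε (pow_pos hun 2), pow_le_pow_left₀ (norm_nonneg _) hxle 2]
    have hbound : ∀ ε : ℝ, 0 < ε → dist x q ≤ dist x s + ε * (2 * ‖u‖) := by
      intro ε hε
      have h3 := hpq _ (hstep ε hε)
      have t1 : dist x q ≤ dist x (x + ε • u) + dist (x + ε • u) q :=
        dist_triangle _ _ _
      have t2 : dist (x + ε • u) s ≤ dist (x + ε • u) x + dist x s :=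
        dist_triangle _ _ _
      have e1 : dist x (x + ε • u) = ε * ‖u‖ := by
        rw [dist_eq_norm]
        have : x - (x + ε • u) = -(ε • u) := by abel
        rw [this, norm_neg, norm_smul, Real.norm_eq_abs, abs_of_pos hε]
      have e2 : dist (x + ε • u) x = ε * ‖u‖ := by
        rw [dist_comm]; exact e1
      refine le_of_lt ?_
      calc dist x q ≤ dist x (x + ε • u) + dist (x + ε • u) q := t1
        _ < ε * ‖u‖ + dist (x + ε • u) s := by rw [e1]; linarith
        _ ≤ ε * ‖u‖ + (ε * ‖u‖ + dist x s) := by rw [← e2]; linarith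
        _ = dist x s + ε * (2 * ‖u‖) := by ring
    apply le_of_forall_pos_le_add
    intro δ hδ
    have hε : 0 < δ / (2 * ‖u‖) := by positivity
    have := hbound _ hε
    rw [div_mul_cancel₀] at this
    · exact this
    · positivity
  have hsub1 : {x : E | dist x t₁ ≤ dist x s} ⊆ {x : E | dist x t₂ ≤ dist x s} :=
    fun x hx => key t₁ t₂ h1 (fun y hy => (hc y).mp hy) x hx
  have hsub2 : {x : E | dist x t₂ ≤ dist x s} ⊆ {x : E | dist x t₁ ≤ dist x s} :=
    fun x hx => key t₂ t₁ h2 (fun y hy => (hc y).mpr hy) x hx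
  exact lemA t₁ t₂ s (Set.Subset.antisymm hsub1 hsub2)

/-- The multipoint (higher-order) Voronoi cell of `S` within the set of sites `T`. -/
def vcell {n : ℕ} (T S : Finset (EuclideanSpace ℝ (Fin n))) :
    Set (EuclideanSpace ℝ (Fin n)) :=
  {x | ∀ s ∈ S, ∀ t ∈ T \ S, dist x s ≤ dist x t}

theorem stmt_16 {n : ℕ} (T S : Finset (EuclideanSpace ℝ (Fin n)))
    (hS : 2 ≤ S.card) (hTS : 2 ≤ (T \ S).card) (hST : S ⊂ T)
    (s₁ s₂ t₁ t₂ : EuclideanSpace ℝ (Fin n))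
    (hs₁ : s₁ ∈ S) (hs₂ : s₂ ∈ S) (ht₁ : t₁ ∈ T \ S) (ht₂ : t₂ ∈ T \ S)
    (hne : (s₁, t₁) ≠ (s₂, t₂))
    (hsame : {x : EuclideanSpace ℝ (Fin n) | dist x s₁ ≤ dist x t₁} =
             {x : EuclideanSpace ℝ (Fin n) | dist x s₂ ≤ dist x t₂}) :
    vcell T S =
      ⋂ p ∈ ((S ×ˢ (T \ S)).erase (s₁, t₁)).erase (s₂, t₂),
        {x : EuclideanSpace ℝ (Fin n) | dist x p.1 ≤ dist x p.2} := by
  -- t ∈ T \ S and s ∈ S implies t ≠ s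
  have ht₁s : ∀ s ∈ S, t₁ ≠ s := by
    intro s hs he; exact (Finset.mem_sdiff.mp ht₁).2 (he ▸ hs)
  have ht₂s : ∀ s ∈ S, t₂ ≠ s := by
    intro s hs he; exact (Finset.mem_sdiff.mp ht₂).2 (he ▸ hs)
  -- degenerate cases are impossible
  have hsne : s₁ ≠ s₂ := by
    intro hss
    subst hss
    exact hne (by rw [lemB s₁ t₁ t₂ (ht₁s s₁ hs₁) (ht₂s s₁ hs₁) hsame])
  have htne : t₁ ≠ t₂ := by
    intro htt
    subst htt
    exact hne (by rw [lemA s₁ s₂ t₁ hsame])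
  ext x
  simp only [vcell, Set.mem_setOf_eq, Set.mem_iInter]
  constructor
  · intro h p hp
    have hp' : p ∈ S ×ˢ (T \ S) :=
      Finset.mem_of_mem_erase (Finset.mem_of_mem_erase hp)
    exact h p.1 (Finset.mem_product.mp hp').1 p.2 (Finset.mem_product.mp hp').2
  · intro h s hs t ht
    -- the two surviving "cross" inequalities
    have k₁ : dist x s₁ ≤ dist x t₂ := by
      refine h (s₁, t₂) ?_
      refine Finset.mem_erase.mpr ⟨?_, Finset.mem_erase.mpr ⟨?_, ?_⟩⟩
      · exact fun he => hsne (congrArg Prod.fst he)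
      · exact fun he => htne (congrArg Prod.snd he).symm
      · exact Finset.mem_product.mpr ⟨hs₁, ht₂⟩
    have k₂ : dist x s₂ ≤ dist x t₁ := by
      refine h (s₂, t₁) ?_
      refine Finset.mem_erase.mpr ⟨?_, Finset.mem_erase.mpr ⟨?_, ?_⟩⟩
      · exact fun he => htne (congrArg Prod.snd he)
      · exact fun he => hsne (congrArg Prod.fst he).symm
      · exact Finset.mem_product.mpr ⟨hs₂, ht₁⟩
    have hiff : dist x s₁ ≤ dist x t₁ ↔ dist x s₂ ≤ dist x t₂ := by
      have := Set.ext_iff.mp hsame x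
      simpa using this
    have key1 : dist x s₁ ≤ dist x t₁ := by
      by_contra hlt
      push_neg at hlt
      have hlt2 : dist x t₂ < dist x s₂ := by
        by_contra h'
        push_neg at h'
        exact absurd (hiff.mpr h') (not_le.mpr hlt)
      linarith
    have key2 : dist x s₂ ≤ dist x t₂ := hiff.mp key1
    by_cases h1 : (s, t) = (s₁, t₁)
    · rw [show s = s₁ from congrArg Prod.fst h1, show t = t₁ from congrArg Prod.snd h1]
      exact key1
    by_cases h2 : (s, t) = (s₂, t₂)
    · rw [show s = s₂ from congrArg Prod.fst h2, show t = t₂ from congrArg Prod.snd h2]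
      exact key2
    · refine h (s, t) ?_
      exact Finset.mem_erase.mpr ⟨h2, Finset.mem_erase.mpr ⟨h1,
        Finset.mem_product.mpr ⟨hs, ht⟩⟩⟩
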